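/- Let V be a 3-dimensional vector space over a field k, g a symmetric bilinear form on V, a, b ∈ V, and T : V → V the operator Tv = g(b,v)a − g(a,v)b. Then the second coefficient c₂(T) of the characteristic polynomial of T (the sum of principal 2×2 minors) equals Δ = g(a,a)g(b,b) − g(a,b)². -/

import Mathlib

open Module Polynomial

lemma charpoly_coeff_one_fin_three {k : Type*} [Field k] (M : Matrix (Fin 3) (Fin 3) k) :
    M.charpoly.coeff 1 = M 0 0 * M 1 1 - M 0 1 * M 1 0 + (M 0 0 * M 2 2 - M 0 2 * M 2 0)
      + (M 1 1 * M 2 2 - M 1 2 * M 2 1) := by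
  rw [Matrix.charpoly, Matrix.det_fin_three]
  simp only [Matrix.charmatrix_apply, Matrix.one_apply, Matrix.of_apply]
  norm_num
  ring_nf
  simp [Polynomial.coeff_add, Polynomial.coeff_sub, coeff_X_pow, coeff_C_mul, coeff_X, coeff_C,
    Polynomial.coeff_mul_X, Polynomial.coeff_ofNat_mul]
  ring

theorem stmt5 (k V : Type*) [Field k] [AddCommGroup V] [Module k V]
    [FiniteDimensional k V] (hdim : finrank k V = 3)
    (g : LinearMap.BilinForm k V) (hg : g.IsSymm) (a b : V)
    (T : V →ₗ[k] V) (hT : ∀ v, T v = g b v • a - g a v • b) :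
    (LinearMap.charpoly T).coeff 1 = g a a * g b b - g a b ^ 2 := by
  let B : Basis (Fin 3) k V := finBasisOfFinrankEq k V hdim
  rw [← T.charpoly_toMatrix B, charpoly_coeff_one_fin_three]
  have hM : ∀ i j, LinearMap.toMatrix B B T i j
      = g b (B j) * B.repr a i - g a (B j) * B.repr b i := by
    intro i j
    rw [LinearMap.toMatrix_apply, hT]
    simp
  have hx : ∀ x : V, g a x = ∑ i, B.repr x i * g a (B i) := by
    intro x
    conv_lhs => rw [← B.sum_repr x]
    simp only [map_sum, map_smul, smul_eq_mul]
  have hy : ∀ x : V, g b x = ∑ i, B.repr x i * g b (B i) := by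
    intro x
    conv_lhs => rw [← B.sum_repr x]
    simp only [map_sum, map_smul, smul_eq_mul]
  have hsymm : g a b = g b a := by exact hg.eq a b
  have : g a b ^ 2 = (g b a) * (g a b) := by rw [hsymm]; ring
  rw [this, hx a, hy b, hy a, hx b]
  simp only [hM, Fin.sum_univ_three]
  ring
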